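/- Let s ≥ 0, r ≥ 1, F > 0, ν > 0, c ≠ 0, q ∈ ℝ, and let τ₀ > 0, u₀ := q − cτ₀ > 0 satisfy the equilibrium condition τ₀^{s+1}·u₀^r = 1. Set c_s² := 1/(F·τ₀³), df_* := ((s+1)/r)·(u₀/τ₀), and g' := −(s+1)·τ₀^s·u₀^r + c·r·τ₀^{s+1}·u₀^{r−1}, and define the 2×2 real matrix J := [[0, τ₀²], [g'/(cν), (c_s² − c²)·τ₀²/(cν)]]. Then J has two real eigenvalues of opposite signs (one positive, one negative) if and only if c·(df_* − c) < 0; that is, the equilibrium τ₀ of the traveling-wave profile ODE is a saddle point exactly when c·(df_*(τ₀) − c) < 0. -/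

import Mathlib

set_option maxHeartbeats 1000000


open Matrix

/-- The equilibrium `(τ₀, 0)` of the St. Venant traveling-wave profile ODE,
with Jacobian `J = [[0, τ₀²], [g'/(cν), (c_s² − c²)τ₀²/(cν)]]`, is a saddle
point (two real eigenvalues of opposite signs) exactly when
`c·(df_*(τ₀) − c) < 0`. -/
theorem stmt17 (s r F ν c q τ₀ u₀ : ℝ) (hs : 0 ≤ s) (hr : 1 ≤ r)
    (hF : 0 < F) (hν : 0 < ν) (hc : c ≠ 0)
    (hτ₀ : 0 < τ₀) (hu₀def : u₀ = q - c * τ₀) (hu₀ : 0 < u₀)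
    (heq : τ₀ ^ (s + 1) * u₀ ^ r = 1)
    (cs2 df g' : ℝ)
    (hcs2 : cs2 = 1 / (F * τ₀ ^ 3))
    (hdf : df = ((s + 1) / r) * (u₀ / τ₀))
    (hg' : g' = -(s + 1) * τ₀ ^ s * u₀ ^ r + c * r * τ₀ ^ (s + 1) * u₀ ^ (r - 1))
    (J : Matrix (Fin 2) (Fin 2) ℝ)
    (hJ : J = !![0, τ₀ ^ 2; g' / (c * ν), (cs2 - c ^ 2) * τ₀ ^ 2 / (c * ν)]) :
    (∃ μ₁ μ₂ : ℝ, μ₁ < 0 ∧ 0 < μ₂ ∧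
        (J - μ₁ • (1 : Matrix (Fin 2) (Fin 2) ℝ)).det = 0 ∧
        (J - μ₂ • (1 : Matrix (Fin 2) (Fin 2) ℝ)).det = 0)
      ↔ c * (df - c) < 0 := by
  have hrpos : (0:ℝ) < r := lt_of_lt_of_le one_pos hr
  have hcν : c * ν ≠ 0 := mul_ne_zero hc hν.ne'
  obtain ⟨T, hT⟩ : ∃ T : ℝ, T = (cs2 - c ^ 2) * τ₀ ^ 2 / (c * ν) := ⟨_, rfl⟩
  obtain ⟨D, hD⟩ : ∃ D : ℝ, D = -(τ₀ ^ 2 * g') / (c * ν) := ⟨_, rfl⟩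
  have hdet : ∀ μ : ℝ, (J - μ • (1 : Matrix (Fin 2) (Fin 2) ℝ)).det
      = μ ^ 2 - T * μ + D := by
    intro μ
    rw [hJ, hT, hD]
    simp [Matrix.det_fin_two, Matrix.sub_apply, Matrix.smul_apply, Matrix.one_apply]
    ring
  -- rpow splitting
  have ht : τ₀ ^ (s + 1) = τ₀ ^ s * τ₀ := by
    rw [Real.rpow_add hτ₀, Real.rpow_one]
  have hu : u₀ ^ r = u₀ ^ (r - 1) * u₀ := by
    have h : r - 1 + 1 = r := by ring
    rw [← h, Real.rpow_add_one hu₀.ne' (r - 1)]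
    rw [h]
  have h2 : (τ₀ ^ s * τ₀) * (u₀ ^ (r - 1) * u₀) = 1 := by
    rw [← ht, ← hu]; exact heq
  have gu : g' * (u₀ * τ₀) = r * τ₀ * c - (s + 1) * u₀ := by
    rw [hg', ht, hu]
    linear_combination (c * r * τ₀ - (s + 1) * u₀) * h2
  have hdfτ : (s + 1) * u₀ = r * df * τ₀ := by
    rw [hdf]; field_simp
  have key : D * (u₀ * ν * c ^ 2) = (c * (df - c)) * (τ₀ ^ 2 * r) := by
    rw [hD, div_mul_eq_mul_div, div_eq_iff hcν]
    linear_combination (-τ₀ * ν * c ^ 2) * gu + (τ₀ * ν * c ^ 2) * hdfτ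
  have P1 : 0 < u₀ * ν * c ^ 2 := by positivity
  have P2 : 0 < τ₀ ^ 2 * r := by positivity
  have hiff : D < 0 ↔ c * (df - c) < 0 := by
    constructor <;> intro h <;> nlinarith [key]
  rw [← hiff]
  constructor
  · rintro ⟨μ₁, μ₂, h1, h2', e1, e2⟩
    rw [hdet] at e1 e2
    have hne : μ₁ - μ₂ ≠ 0 := by intro h; linarith [sub_eq_zero.mp h]
    have h3 : (μ₁ - μ₂) * (μ₁ + μ₂ - T) = 0 := by linear_combination e1 - e2
    have hT' : T = μ₁ + μ₂ := by
      rcases mul_eq_zero.mp h3 with h | h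
      · exact absurd h hne
      · linarith
    have hDm : D = μ₁ * μ₂ := by linear_combination e1 + μ₁ * hT'
    rw [hDm]
    exact mul_neg_of_neg_of_pos h1 h2'
  · intro hDneg
    have hSpos : 0 < T ^ 2 - 4 * D := by have := sq_nonneg T; linarith
    obtain ⟨w, hw0, hsq⟩ : ∃ w : ℝ, 0 ≤ w ∧ w ^ 2 = T ^ 2 - 4 * D :=
      ⟨Real.sqrt _, Real.sqrt_nonneg _, Real.sq_sqrt hSpos.le⟩
    refine ⟨(T - w) / 2, (T + w) / 2, ?_, ?_, ?_, ?_⟩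
    · nlinarith [hsq, hw0]
    · nlinarith [hsq, hw0]
    · rw [hdet]; linear_combination (1/4 : ℝ) * hsq
    · rw [hdet]; linear_combination (1/4 : ℝ) * hsq
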